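/- Let Ω ⊆ ℝ^d be open with nonempty boundary and let x ∈ ∂Ω be an LCDD boundary point in standard position. Then for Lebesgue-almost every z ∈ ℝ^d, the indicator 1_{Ω_{x,t}}(z) converges to 1_{F̃_x(Ω)}(z) as t → 0+, where Ω_{x,t} := (Ω − x)/t; moreover 1_{F̃_x(Ω)}(z) = 1_{T^B_x(closure(Ω))}(z) for Lebesgue-almost every z ∈ ℝ^d. -/

import Mathlib

open Set Topology Filter MeasureTheory

noncomputable section

/-- The epigraph of `γ : ℝ^{d-1} → ℝ`, as a subset of `ℝ^d ≃ ℝ^{d-1} × ℝ`. -/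
def epi {n : ℕ} (γ : EuclideanSpace ℝ (Fin n) → ℝ) : Set (EuclideanSpace ℝ (Fin n) × ℝ) :=
  {y | γ y.1 ≤ y.2}

/-- The strict epigraph of `γ`. -/
def epiStrict {n : ℕ} (γ : EuclideanSpace ℝ (Fin n) → ℝ) : Set (EuclideanSpace ℝ (Fin n) × ℝ) :=
  {y | γ y.1 < y.2}

/-- The Bouligand tangent cone of `A` at `a`: `0` together with all `v ≠ 0` such that there is a
sequence `(u m)` in `A` with `u m ≠ a`, `u m → a`, and `(u m - a)/‖u m - a‖ → v/‖v‖`. -/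
def bouligand {E : Type*} [NormedAddCommGroup E] [NormedSpace ℝ E] (A : Set E) (a : E) :
    Set E :=
  {0} ∪ {v | v ≠ 0 ∧ ∃ u : ℕ → E, (∀ m, u m ∈ A) ∧ (∀ m, u m ≠ a) ∧
    Tendsto u atTop (nhds a) ∧
    Tendsto (fun m => ‖u m - a‖⁻¹ • (u m - a)) atTop (nhds (‖v‖⁻¹ • v))}

/-- The open feasible direction cone of `Ω` at `x`. -/
def feasible {E : Type*} [AddCommGroup E] [Module ℝ E] (Ω : Set E) (x : E) : Set E :=
  {v | ∃ tv > (0 : ℝ), ∀ t ∈ Set.Ioo (0 : ℝ) tv, x + t • v ∈ Ω}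

set_option maxHeartbeats 1000000 in
/-- at an LCDD boundary point `x` of an open set `Ω` in standard position, for
Lebesgue-a.e. `z` the indicator of the rescaled set `Ω_{x,t} = {w | x + t • w ∈ Ω}` at `z`
converges to the indicator of the open feasible direction cone as `t → 0+`, and for a.e. `z`
the indicators of the feasible cone and of the Bouligand tangent cone of `closure Ω` agree. -/
theorem stmt_10 (n : ℕ) (hn : 1 ≤ n) (Ω : Set (EuclideanSpace ℝ (Fin n) × ℝ))
    (hΩ : IsOpen Ω) (hbd : (frontier Ω).Nonempty)
    (x : EuclideanSpace ℝ (Fin n) × ℝ) (hx : x ∈ frontier Ω)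
    (δ : ℝ) (hδ : 0 < δ) (K : NNReal) (γ : EuclideanSpace ℝ (Fin n) → ℝ)
    (hγ : LipschitzWith K γ)
    (hcl : closure Ω ∩ Metric.ball x δ = epi γ ∩ Metric.ball x δ)
    (hop : Ω ∩ Metric.ball x δ = epiStrict γ ∩ Metric.ball x δ)
    (g : EuclideanSpace ℝ (Fin n) → ℝ) (hgc : Continuous g)
    (hg : ∀ v' : EuclideanSpace ℝ (Fin n),
      Tendsto (fun t : ℝ => (γ (x.1 + t • v') - γ x.1) / t) (𝓝[>] 0) (𝓝 (g v'))) :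
    (∀ᵐ z ∂(volume : Measure (EuclideanSpace ℝ (Fin n) × ℝ)),
      Tendsto (fun t : ℝ => Set.indicator {w : EuclideanSpace ℝ (Fin n) × ℝ | x + t • w ∈ Ω}
          (fun _ => (1 : ℝ)) z)
        (𝓝[>] 0) (𝓝 (Set.indicator (feasible Ω x) (fun _ => (1 : ℝ)) z))) ∧
    (∀ᵐ z ∂(volume : Measure (EuclideanSpace ℝ (Fin n) × ℝ)),
      Set.indicator (feasible Ω x) (fun _ => (1 : ℝ)) z
        = Set.indicator (bouligand (closure Ω) x) (fun _ => (1 : ℝ)) z) := by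
  classical
  have hne : (𝓝[>] (0:ℝ)).NeBot := inferInstance
  have hxball : x ∈ Metric.ball x δ := Metric.mem_ball_self hδ
  have hfr : x ∈ closure Ω \ Ω := hΩ.frontier_eq ▸ hx
  have hle : γ x.1 ≤ x.2 := by
    have h1 : x ∈ epi γ ∩ Metric.ball x δ := hcl ▸ ⟨hfr.1, hxball⟩
    exact h1.1
  have hnlt : ¬ γ x.1 < x.2 := by
    intro h
    have h1 : x ∈ epiStrict γ ∩ Metric.ball x δ := ⟨h, hxball⟩
    rw [← hop] at h1
    exact hfr.2 h1.1
  have hx2 : x.2 = γ x.1 := le_antisymm (not_lt.mp hnlt) hle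
  -- g 0 = 0
  have hg0 : g 0 = 0 := by
    have h1 := hg 0
    have h2 : Tendsto (fun t : ℝ => (γ (x.1 + t • (0 : EuclideanSpace ℝ (Fin n))) - γ x.1) / t)
        (𝓝[>] (0:ℝ)) (𝓝 0) := by
      simp only [smul_zero, add_zero, sub_self, zero_div]
      exact tendsto_const_nhds
    exact tendsto_nhds_unique h1 h2
  -- positive homogeneity of g
  have hghom : ∀ (c : ℝ), 0 < c → ∀ v' : EuclideanSpace ℝ (Fin n), g (c • v') = c * g v' := by
    intro c hc v'
    have hmap : Tendsto (fun t : ℝ => c * t) (𝓝[>] (0:ℝ)) (𝓝[>] (0:ℝ)) := by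
      apply tendsto_nhdsWithin_of_tendsto_nhds_of_eventually_within
      · have h1 : Tendsto (fun t : ℝ => c * t) (𝓝 (0:ℝ)) (𝓝 (c * 0)) :=
          (continuous_const.mul continuous_id).tendsto 0
        simpa using h1.mono_left nhdsWithin_le_nhds
      · filter_upwards [self_mem_nhdsWithin] with t ht
        exact mul_pos hc ht
    have h1 : Tendsto (fun t : ℝ => c * ((γ (x.1 + (c * t) • v') - γ x.1) / (c * t)))
        (𝓝[>] (0:ℝ)) (𝓝 (c * g v')) := ((hg v').comp hmap).const_mul c
    have h2 : Tendsto (fun t : ℝ => (γ (x.1 + t • (c • v')) - γ x.1) / t)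
        (𝓝[>] (0:ℝ)) (𝓝 (c * g v')) := by
      apply h1.congr'
      filter_upwards [self_mem_nhdsWithin] with t ht
      have ht' : t ≠ 0 := ne_of_gt ht
      have hc' : c ≠ 0 := hc.ne'
      have hct : t • (c • v') = (c * t) • v' := by rw [smul_smul, mul_comm]
      rw [hct]
      field_simp
    exact tendsto_nhds_unique (hg (c • v')) h2
  -- key equivalence
  have key : ∀ (z : EuclideanSpace ℝ (Fin n) × ℝ) (t : ℝ), 0 < t →
      x + t • z ∈ Metric.ball x δ →
      (x + t • z ∈ Ω ↔ (γ (x.1 + t • z.1) - γ x.1) / t < z.2) := by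
    intro z t ht hb
    have hfst : (x + t • z).1 = x.1 + t • z.1 := rfl
    have hsnd : (x + t • z).2 = x.2 + t * z.2 := rfl
    constructor
    · intro h
      have h1 : x + t • z ∈ epiStrict γ ∩ Metric.ball x δ := hop ▸ ⟨h, hb⟩
      have h2 : γ (x.1 + t • z.1) < x.2 + t * z.2 := h1.1
      rw [hx2] at h2
      rw [div_lt_iff₀ ht]
      linarith
    · intro h
      rw [div_lt_iff₀ ht] at h
      have h2 : γ (x.1 + t • z.1) < x.2 + t * z.2 := by rw [hx2]; linarith
      have h1 : x + t • z ∈ epiStrict γ ∩ Metric.ball x δ := ⟨h2, hb⟩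
      rw [← hop] at h1
      exact h1.1
  -- eventually in the ball
  have hball : ∀ z : EuclideanSpace ℝ (Fin n) × ℝ,
      ∀ᶠ t : ℝ in 𝓝[>] (0:ℝ), x + t • z ∈ Metric.ball x δ := by
    intro z
    have h1 : Tendsto (fun t : ℝ => x + t • z) (𝓝 (0:ℝ)) (𝓝 (x + (0:ℝ) • z)) :=
      (continuous_const.add ((continuous_id.smul continuous_const))).tendsto 0
    have h2 : Tendsto (fun t : ℝ => x + t • z) (𝓝[>] (0:ℝ)) (𝓝 x) := by
      simpa using h1.mono_left nhdsWithin_le_nhds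
    exact h2.eventually_mem (Metric.ball_mem_nhds x hδ)
  -- feasible membership when g z.1 < z.2
  have hfeas : ∀ z : EuclideanSpace ℝ (Fin n) × ℝ, g z.1 < z.2 →
      (∀ᶠ t : ℝ in 𝓝[>] (0:ℝ), x + t • z ∈ Ω) ∧ z ∈ feasible Ω x := by
    intro z hz
    have h1 : ∀ᶠ t : ℝ in 𝓝[>] (0:ℝ), (γ (x.1 + t • z.1) - γ x.1) / t < z.2 :=
      (hg z.1).eventually_lt_const hz
    have hev : ∀ᶠ t : ℝ in 𝓝[>] (0:ℝ), x + t • z ∈ Ω := by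
      filter_upwards [h1, hball z, self_mem_nhdsWithin] with t ht1 ht2 ht3
      exact (key z t ht3 ht2).mpr ht1
    refine ⟨hev, ?_⟩
    rcases mem_nhdsGT_iff_exists_Ioo_subset.mp hev with ⟨u, hu, hsub⟩
    exact ⟨u, hu, fun t ht => hsub ht⟩
  -- non-feasibility when z.2 < g z.1
  have hnfeas : ∀ z : EuclideanSpace ℝ (Fin n) × ℝ, z.2 < g z.1 →
      (∀ᶠ t : ℝ in 𝓝[>] (0:ℝ), x + t • z ∉ Ω) ∧ z ∉ feasible Ω x := by
    intro z hz
    have h1 : ∀ᶠ t : ℝ in 𝓝[>] (0:ℝ), z.2 < (γ (x.1 + t • z.1) - γ x.1) / t :=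
      (hg z.1).eventually_const_lt hz
    have hev : ∀ᶠ t : ℝ in 𝓝[>] (0:ℝ), x + t • z ∉ Ω := by
      filter_upwards [h1, hball z, self_mem_nhdsWithin] with t ht1 ht2 ht3 hmem
      exact absurd ((key z t ht3 ht2).mp hmem) (not_lt.mpr ht1.le)
    refine ⟨hev, ?_⟩
    rintro ⟨tv, htv, hf⟩
    have h2 : ∀ᶠ t : ℝ in 𝓝[>] (0:ℝ), t ∈ Set.Ioo (0:ℝ) tv :=
      Ioo_mem_nhdsGT_of_mem ⟨le_refl 0, htv⟩
    rcases (hev.and h2).exists with ⟨t, hnot, ht⟩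
    exact hnot (hf t ht)
  -- bouligand membership when g z.1 < z.2
  have hbou : ∀ z : EuclideanSpace ℝ (Fin n) × ℝ, g z.1 < z.2 →
      z ∈ bouligand (closure Ω) x := by
    intro z hz
    have hz0 : z ≠ 0 := by
      rintro rfl
      rw [show (0 : EuclideanSpace ℝ (Fin n) × ℝ).1 = 0 from rfl, hg0] at hz
      exact lt_irrefl _ hz
    rcases (hfeas z hz).2 with ⟨tv, htv, hf⟩
    have htm : ∀ m : ℕ, 0 < tv / ((m : ℝ) + 2) := by
      intro m; positivity
    have htm2 : ∀ m : ℕ, tv / ((m : ℝ) + 2) < tv := by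
      intro m
      apply div_lt_self htv
      have : (0:ℝ) ≤ (m:ℝ) := Nat.cast_nonneg m
      linarith
    refine Or.inr ⟨hz0, fun m => x + (tv / ((m : ℝ) + 2)) • z, ?_, ?_, ?_, ?_⟩
    · intro m
      exact subset_closure (hf _ ⟨htm m, htm2 m⟩)
    · intro m
      simp only [ne_eq, add_eq_left]
      exact smul_ne_zero (htm m).ne' hz0
    · have h1 : Tendsto (fun m : ℕ => ((m : ℝ) + 2)) atTop atTop :=
        tendsto_atTop_add_const_right _ 2 tendsto_natCast_atTop_atTop
      have h2 : Tendsto (fun m : ℕ => tv / ((m : ℝ) + 2)) atTop (𝓝 0) :=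
        Tendsto.div_atTop tendsto_const_nhds h1
      have h3 : Tendsto (fun m : ℕ => (tv / ((m : ℝ) + 2)) • z) atTop
          (𝓝 ((0:ℝ) • z)) := h2.smul_const z
      have h4 : Tendsto (fun m : ℕ => x + (tv / ((m : ℝ) + 2)) • z) atTop
          (𝓝 (x + (0:ℝ) • z)) := tendsto_const_nhds.add h3
      simpa using h4
    · have heq : ∀ m : ℕ,
          ‖x + (tv / ((m : ℝ) + 2)) • z - x‖⁻¹ • (x + (tv / ((m : ℝ) + 2)) • z - x)
            = ‖z‖⁻¹ • z := by
        intro m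
        have h5 : (0:ℝ) < tv / ((m : ℝ) + 2) := htm m
        have hd : x + (tv / ((m : ℝ) + 2)) • z - x = (tv / ((m : ℝ) + 2)) • z := by
          abel
        rw [hd, norm_smul, Real.norm_eq_abs, abs_of_pos h5, mul_inv, smul_smul,
          mul_right_comm, inv_mul_cancel₀ h5.ne', one_mul]
      have := tendsto_const_nhds (x := ‖z‖⁻¹ • z) (f := atTop (α := ℕ))
      apply this.congr
      intro m
      exact (heq m).symm
    
  -- bouligand non-membership when z.2 < g z.1
  have hnbou : ∀ z : EuclideanSpace ℝ (Fin n) × ℝ, z.2 < g z.1 →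
      z ∉ bouligand (closure Ω) x := by
    intro z hz hmem
    rcases hmem with h0 | ⟨hz0, u, huA, hux, hlim, hdir⟩
    · rw [Set.mem_singleton_iff] at h0
      subst h0
      rw [show (0 : EuclideanSpace ℝ (Fin n) × ℝ).1 = 0 from rfl, hg0] at hz
      exact lt_irrefl _ hz
    · have hnz : (0:ℝ) < ‖z‖ := norm_pos_iff.mpr hz0
      set v : EuclideanSpace ℝ (Fin n) × ℝ := ‖z‖⁻¹ • z with hv
      set r : ℕ → ℝ := fun m => ‖u m - x‖ with hrdef
      have hrpos : ∀ m, 0 < r m := fun m => norm_pos_iff.mpr (sub_ne_zero.mpr (hux m))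
      set w : ℕ → EuclideanSpace ℝ (Fin n) × ℝ := fun m => (r m)⁻¹ • (u m - x) with hwdef
      have hwlim : Tendsto w atTop (𝓝 v) := hdir
      have hrlim : Tendsto r atTop (𝓝[>] (0:ℝ)) := by
        apply tendsto_nhdsWithin_of_tendsto_nhds_of_eventually_within
        · have h1 : Tendsto (fun m => u m - x) atTop (𝓝 (x - x)) :=
            hlim.sub tendsto_const_nhds
          have h2 := h1.norm
          simpa using h2
        · exact Filter.Eventually.of_forall hrpos
      have hud : ∀ m, u m = x + (r m) • (w m) := by
        intro m
        rw [hwdef]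
        simp only
        rw [smul_smul, mul_inv_cancel₀ (hrpos m).ne', one_smul]
        abel
      have hball' : ∀ᶠ m in atTop, u m ∈ Metric.ball x δ :=
        hlim.eventually_mem (Metric.ball_mem_nhds x hδ)
      have hineq : ∀ᶠ m in atTop,
          (γ (x.1 + (r m) • (w m).1) - γ x.1) / r m ≤ (w m).2 := by
        filter_upwards [hball'] with m hm
        have hmem2 : u m ∈ epi γ ∩ Metric.ball x δ := hcl ▸ ⟨huA m, hm⟩
        have h3 : γ ((u m).1) ≤ (u m).2 := hmem2.1
        rw [hud m] at h3
        have hfst : (x + (r m) • (w m)).1 = x.1 + (r m) • (w m).1 := rfl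
        have hsnd : (x + (r m) • (w m)).2 = x.2 + (r m) * (w m).2 := rfl
        rw [hfst, hsnd, hx2] at h3
        rw [div_le_iff₀ (hrpos m)]
        linarith [h3]
      have hb : Tendsto (fun m => (γ (x.1 + (r m) • v.1) - γ x.1) / r m) atTop
          (𝓝 (g v.1)) := (hg v.1).comp hrlim
      have hc : Tendsto
          (fun m => (γ (x.1 + (r m) • (w m).1) - γ (x.1 + (r m) • v.1)) / r m) atTop
          (𝓝 0) := by
        have hKle : ∀ m,
            ‖(γ (x.1 + (r m) • (w m).1) - γ (x.1 + (r m) • v.1)) / r m‖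
              ≤ (K : ℝ) * ‖(w m).1 - v.1‖ := by
          intro m
          rw [Real.norm_eq_abs, abs_div, abs_of_pos (hrpos m), div_le_iff₀ (hrpos m)]
          have hlip := hγ.dist_le_mul (x.1 + (r m) • (w m).1) (x.1 + (r m) • v.1)
          rw [Real.dist_eq] at hlip
          have hd : dist (x.1 + (r m) • (w m).1) (x.1 + (r m) • v.1)
              = r m * ‖(w m).1 - v.1‖ := by
            rw [dist_eq_norm]
            have : x.1 + (r m) • (w m).1 - (x.1 + (r m) • v.1)
                = (r m) • ((w m).1 - v.1) := by
              rw [smul_sub]; abel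
            rw [this, norm_smul, Real.norm_eq_abs, abs_of_pos (hrpos m)]
          rw [hd] at hlip
          calc |γ (x.1 + (r m) • (w m).1) - γ (x.1 + (r m) • v.1)|
              ≤ (K : ℝ) * (r m * ‖(w m).1 - v.1‖) := hlip
            _ = (K : ℝ) * ‖(w m).1 - v.1‖ * r m := by ring
        have hK0 : Tendsto (fun m => (K : ℝ) * ‖(w m).1 - v.1‖) atTop (𝓝 0) := by
          have h1 : Tendsto (fun m => (w m).1) atTop (𝓝 v.1) :=
            (continuous_fst.tendsto v).comp hwlim
          have h2 : Tendsto (fun m => (w m).1 - v.1) atTop (𝓝 (v.1 - v.1)) :=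
            h1.sub tendsto_const_nhds
          have h3 := h2.norm
          simp only [sub_self, norm_zero] at h3
          have h4 := h3.const_mul (K : ℝ)
          simpa using h4
        exact squeeze_zero_norm hKle hK0
      have ha : Tendsto (fun m => (γ (x.1 + (r m) • (w m).1) - γ x.1) / r m) atTop
          (𝓝 (g v.1)) := by
        have h1 := hb.add hc
        rw [add_zero] at h1
        apply h1.congr
        intro m
        rw [← add_div]
        ring_nf
      have hw2 : Tendsto (fun m => (w m).2) atTop (𝓝 v.2) :=
        (continuous_snd.tendsto v).comp hwlim
      have hfin : g v.1 ≤ v.2 := le_of_tendsto_of_tendsto ha hw2 hineq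
      have hv1 : v.1 = ‖z‖⁻¹ • z.1 := rfl
      have hv2 : v.2 = ‖z‖⁻¹ * z.2 := rfl
      rw [hv1, hv2, hghom _ (inv_pos.mpr hnz) z.1] at hfin
      have : g z.1 ≤ z.2 := by
        have := (mul_le_mul_iff_right₀ (inv_pos.mpr hnz)).mp hfin
        exact this
      linarith
  -- null set
  have hS : MeasurableSet {z : EuclideanSpace ℝ (Fin n) × ℝ | z.2 = g z.1} := by
    apply measurableSet_eq_fun
    · exact measurable_snd
    · exact hgc.measurable.comp measurable_fst
  have hnull : volume {z : EuclideanSpace ℝ (Fin n) × ℝ | z.2 = g z.1} = 0 := by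
    rw [MeasureTheory.Measure.volume_eq_prod, MeasureTheory.Measure.prod_apply hS]
    have hslice : ∀ a : EuclideanSpace ℝ (Fin n),
        (Prod.mk a ⁻¹' {z : EuclideanSpace ℝ (Fin n) × ℝ | z.2 = g z.1}) = {g a} := by
      intro a; ext b; simp [Set.mem_singleton_iff]
    simp [hslice]
  have hco : ∀ᵐ z ∂(volume : Measure (EuclideanSpace ℝ (Fin n) × ℝ)), z.2 ≠ g z.1 := by
    rw [MeasureTheory.ae_iff]
    simp only [ne_eq, not_not]
    exact hnull
  constructor
  · filter_upwards [hco] with z hzne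
    rcases lt_or_gt_of_ne hzne with h | h
    · rw [Set.indicator_of_notMem (hnfeas z h).2]
      apply Filter.Tendsto.congr' _ tendsto_const_nhds
      filter_upwards [(hnfeas z h).1] with t ht
      have hz' : z ∉ {w : EuclideanSpace ℝ (Fin n) × ℝ | x + t • w ∈ Ω} := ht
      exact (Set.indicator_of_notMem hz' (fun _ => (1:ℝ))).symm
    · rw [Set.indicator_of_mem (hfeas z h).2]
      apply Filter.Tendsto.congr' _ tendsto_const_nhds
      filter_upwards [(hfeas z h).1] with t ht
      have hz' : z ∈ {w : EuclideanSpace ℝ (Fin n) × ℝ | x + t • w ∈ Ω} := ht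
      exact (Set.indicator_of_mem hz' (fun _ => (1:ℝ))).symm
  · filter_upwards [hco] with z hzne
    rcases lt_or_gt_of_ne hzne with h | h
    · rw [Set.indicator_of_notMem (hnfeas z h).2,
        Set.indicator_of_notMem (hnbou z h)]
    · rw [Set.indicator_of_mem (hfeas z h).2, Set.indicator_of_mem (hbou z h)]
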